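/- arXiv:2008.05648 — 7 statements merged into one kernel-verified Lean document; each statement's English description precedes it below -/
import Mathlib

section
/- For all real numbers δ, C ≥ 0 with C > 0 and δ/C ≤ 1, we have (δ + C)·ln(δ/C + 1) ≥ δ + δ²/(3C). -/
open Real Set

lemma aux_log_chord {x : ℝ} (h0 : 0 ≤ x) (h1 : x ≤ 1) :
    x * Real.log 2 ≤ Real.log (1 + x) := by
  have hc := strictConcaveOn_log_Ioi.concaveOn
  have this : (1 - x) • Real.log 1 + x • Real.log 2 ≤ Real.log ((1 - x) • (1:ℝ) + x • (2:ℝ)) :=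
    hc.2 (Set.mem_Ioi.mpr one_pos) (Set.mem_Ioi.mpr two_pos) (by linarith) h0 (by ring)
  simp only [smul_eq_mul, Real.log_one, mul_zero, zero_add] at this
  calc x * Real.log 2 ≤ Real.log ((1 - x) * 1 + x * 2) := this
    _ = Real.log (1 + x) := by ring_nf

lemma aux_key {x : ℝ} (h0 : 0 ≤ x) (h1 : x ≤ 1) :
    x + x ^ 2 / 3 ≤ (1 + x) * Real.log (1 + x) := by
  set F : ℝ → ℝ := fun t => (1 + t) * Real.log (1 + t) - t - t ^ 2 / 3 with hF
  have hderiv : ∀ t ∈ interior (Icc (0:ℝ) 1), HasDerivAt F (Real.log (1 + t) - 2 * t / 3) t := by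
    intro t ht
    rw [interior_Icc] at ht
    have h1t : (0:ℝ) < 1 + t := by linarith [ht.1]
    have hlog : HasDerivAt (fun t : ℝ => Real.log (1 + t)) (1 / (1 + t)) t := by
      have := (Real.hasDerivAt_log h1t.ne').comp t ((hasDerivAt_id t).const_add 1)
      simpa [one_div, Function.comp_def] using this
    have hmul : HasDerivAt (fun t : ℝ => (1 + t) * Real.log (1 + t))
        (1 * Real.log (1 + t) + (1 + t) * (1 / (1 + t))) t :=
      (((hasDerivAt_id t).const_add 1).mul hlog)
    have hsq : HasDerivAt (fun t : ℝ => t ^ 2 / 3) (2 * t / 3) t := by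
      simpa using ((hasDerivAt_pow 2 t).div_const 3)
    have := (hmul.sub (hasDerivAt_id t)).sub hsq
    refine this.congr_deriv ?_
    rw [mul_one_div_cancel h1t.ne']; ring
  have hcont : ContinuousOn F (Icc (0:ℝ) 1) := by
    apply ContinuousOn.sub
    apply ContinuousOn.sub
    · exact (continuousOn_const.add continuousOn_id).mul
        ((continuousOn_const.add continuousOn_id).log (fun t ht => by
          have := ht.1; intro hc; simp at hc; linarith))
    · exact continuousOn_id
    · exact (continuousOn_pow 2).div_const 3
  have hmono : MonotoneOn F (Icc (0:ℝ) 1) := by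
    apply monotoneOn_of_deriv_nonneg (convex_Icc 0 1) hcont
    · intro t ht
      exact (hderiv t ht).differentiableAt.differentiableWithinAt
    · intro t ht
      rw [(hderiv t ht).deriv]
      rw [interior_Icc] at ht
      have hch := aux_log_chord ht.1.le ht.2.le
      have hl2 : (0.6931471803 : ℝ) < Real.log 2 := Real.log_two_gt_d9
      nlinarith [ht.1.le]
  have h00 : F 0 = 0 := by simp [hF]
  have := hmono (left_mem_Icc.mpr zero_le_one) ⟨h0, h1⟩ h0
  rw [h00] at this
  simp only [hF] at this
  linarith

theorem stmt_0 (δ C : ℝ) (hδ : 0 ≤ δ) (hC : 0 < C) (h : δ / C ≤ 1) :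
    (δ + C) * Real.log (δ / C + 1) ≥ δ + δ ^ 2 / (3 * C) := by
  have hx0 : 0 ≤ δ / C := div_nonneg hδ hC.le
  have hkey := aux_key hx0 h
  have hmul := mul_le_mul_of_nonneg_left hkey hC.le
  have h1 : C * ((1 + δ / C) * Real.log (1 + δ / C)) = (δ + C) * Real.log (δ / C + 1) := by
    rw [show (1 + δ / C) = (δ + C) / C by field_simp; ring]
    field_simp
  have h2 : C * (δ / C + (δ / C) ^ 2 / 3) = δ + δ ^ 2 / (3 * C) := by
    field_simp
  rw [h1, h2] at hmul
  linarith
end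

section
/- For all real numbers δ ≥ C ≥ 1, we have (δ + C)·ln(δ/C + 1) − δ ≥ (1/(2C))·δ·ln δ. -/
/-- `log C + 1 ≤ 2 C log 2` for `C ≥ 1`. -/
lemma aux_L1 (C : ℝ) (hC : 1 ≤ C) : Real.log C + 1 ≤ 2 * C * Real.log 2 := by
  have h := Real.log_le_sub_one_of_pos (by linarith : (0:ℝ) < C)
  have h2 := Real.log_two_gt_d9
  nlinarith

/-- `log x + 1 ≤ 2 C log (x/C + 1)` for `1 ≤ C ≤ x`. -/
lemma aux_L2 (C x : ℝ) (hC : 1 ≤ C) (hx : C ≤ x) :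
    Real.log x + 1 ≤ 2 * C * Real.log (x / C + 1) := by
  have hC0 : (0:ℝ) < C := by linarith
  have hx0 : (0:ℝ) < x := by linarith
  have hxC : (0:ℝ) < x + C := by linarith
  have key : 2 * Real.log 2 + Real.log x + Real.log C ≤ 2 * Real.log (x + C) := by
    have h2 : 4 * (x * C) ≤ (x + C) ^ 2 := by nlinarith [sq_nonneg (x - C)]
    have hlog := Real.log_le_log (by positivity) h2
    have e1 : Real.log (4 * (x * C)) = 2 * Real.log 2 + Real.log x + Real.log C := by
      rw [Real.log_mul (by norm_num) (by positivity), Real.log_mul (ne_of_gt hx0) (ne_of_gt hC0),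
        show (4:ℝ) = 2 ^ 2 by norm_num, Real.log_pow]
      push_cast; ring
    have e2 : Real.log ((x + C) ^ 2) = 2 * Real.log (x + C) := by
      rw [Real.log_pow]; push_cast; ring
    rw [e1, e2] at hlog
    linarith
  have hdiv : Real.log (x / C + 1) = Real.log (x + C) - Real.log C := by
    rw [show x / C + 1 = (x + C) / C by field_simp, Real.log_div (ne_of_gt hxC) (ne_of_gt hC0)]
  have h1 := aux_L1 C hC
  have hlc : 0 ≤ Real.log C := Real.log_nonneg hC
  have hlx : Real.log C ≤ Real.log x := Real.log_le_log hC0 hx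
  rw [hdiv]
  nlinarith [mul_le_mul_of_nonneg_left (sub_nonneg.mpr hlx) (by linarith : (0:ℝ) ≤ C - 1)]

/-- `0 ≤ 2 C log 2 - C - (log C)/2` for `C ≥ 1`. -/
lemma aux_L3 (C : ℝ) (hC : 1 ≤ C) : 0 ≤ 2 * C * Real.log 2 - C - Real.log C / 2 := by
  have hC0 : (0:ℝ) < C := by linarith
  have he : (0:ℝ) < Real.exp 1 := Real.exp_pos 1
  have h := Real.log_le_sub_one_of_pos (show (0:ℝ) < C / Real.exp 1 by positivity)
  rw [Real.log_div (ne_of_gt hC0) (ne_of_gt he), Real.log_exp] at h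
  -- log C ≤ C / exp 1
  have hCE : Real.log C * Real.exp 1 ≤ C := by
    exact (le_div_iff₀ he).mp (by linarith : Real.log C ≤ C / Real.exp 1)
  have he9 := Real.exp_one_gt_d9
  have h2 := Real.log_two_gt_d9
  have hlc : 0 ≤ Real.log C := Real.log_nonneg hC
  nlinarith [mul_pos hC0 he, mul_le_mul_of_nonneg_left hCE (le_of_lt (by norm_num : (0:ℝ) < 1))]

theorem stmt_1 (δ C : ℝ) (hC : 1 ≤ C) (hδ : C ≤ δ) :
    (δ + C) * Real.log (δ / C + 1) - δ ≥ (1 / (2 * C)) * δ * Real.log δ := by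
  have hC0 : (0:ℝ) < C := by linarith
  set f : ℝ → ℝ := fun y => (y + C) * Real.log (y / C + 1) - y - 1 / (2 * C) * (y * Real.log y)
    with hf
  -- derivative of f at any x ≥ C
  have hderiv : ∀ x ∈ Set.Ici C, HasDerivAt f
      (Real.log (x / C + 1) - 1 / (2 * C) * (Real.log x + 1)) x := by
    intro x hx
    have hx1 : C ≤ x := hx
    have hx0 : (0:ℝ) < x := by linarith
    have hq : (0:ℝ) < x / C + 1 := by positivity
    have h1 : HasDerivAt (fun y : ℝ => y / C + 1) (1 / C) x := by
      simpa using ((hasDerivAt_id x).div_const C).add_const (1:ℝ)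
    have h2 : HasDerivAt (fun y : ℝ => Real.log (y / C + 1)) ((x / C + 1)⁻¹ * (1 / C)) x :=
      by have := (Real.hasDerivAt_log (ne_of_gt hq)).comp x h1; exact this
    have h3 : HasDerivAt (fun y : ℝ => (y + C) * Real.log (y / C + 1))
        (1 * Real.log (x / C + 1) + (x + C) * ((x / C + 1)⁻¹ * (1 / C))) x :=
      ((hasDerivAt_id x).add_const C).mul h2
    have h4 : HasDerivAt (fun y : ℝ => y * Real.log y) (Real.log x + 1) x :=
      Real.hasDerivAt_mul_log (ne_of_gt hx0)
    have h5 := (h3.sub (hasDerivAt_id x)).sub (h4.const_mul (1 / (2 * C)))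
    convert h5 using 1
    · rfl
    · rfl
    · rfl
    have hxC : x + C ≠ 0 := by positivity
    field_simp
    ring
  -- f is monotone on Ici C
  have hmono : MonotoneOn f (Set.Ici C) := by
    apply monotoneOn_of_deriv_nonneg (convex_Ici C)
    · exact fun x hx => ((hderiv x hx).differentiableAt).continuousAt.continuousWithinAt
    · intro x hx
      rw [interior_Ici] at hx
      exact ((hderiv x (Set.mem_Ici.mpr (le_of_lt hx))).differentiableAt).differentiableWithinAt
    · intro x hx
      rw [interior_Ici] at hx
      rw [(hderiv x (Set.mem_Ici.mpr (le_of_lt hx))).deriv]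
      have hL2 := aux_L2 C x hC (le_of_lt hx)
      have : 1 / (2 * C) * (Real.log x + 1) ≤ 1 / (2 * C) * (2 * C * Real.log (x / C + 1)) :=
        mul_le_mul_of_nonneg_left hL2 (by positivity)
      have heq : 1 / (2 * C) * (2 * C * Real.log (x / C + 1)) = Real.log (x / C + 1) := by
        field_simp
      linarith [heq ▸ this]
  have hfC : 0 ≤ f C := by
    have h1 : C / C + 1 = (2:ℝ) := by rw [div_self (ne_of_gt hC0)]; norm_num
    have h2 : 1 / (2 * C) * (C * Real.log C) = Real.log C / 2 := by field_simp
    have := aux_L3 C hC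
    simp only [hf, h1, h2]
    linarith
  have hfδ : f C ≤ f δ := hmono (Set.self_mem_Ici) hδ hδ
  have : 0 ≤ f δ := le_trans hfC hfδ
  simp only [hf] at this
  nlinarith [this]
end

section
/- For all reals δ ≥ C ≥ 1, (δ/C + 1)^(2C) ≥ δ·e. -/
theorem stmt_4 (δ C : ℝ) (hC : 1 ≤ C) (hδ : C ≤ δ) :
    (δ / C + 1) ^ (2 * C) ≥ δ * Real.exp 1 := by
  have hC0 : (0:ℝ) < C := lt_of_lt_of_le one_pos hC
  set x := δ / C with hx
  have hx1 : 1 ≤ x := (one_le_div hC0).mpr hδ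
  have hx0 : 0 ≤ x := le_trans zero_le_one hx1
  have hxδ : C * x = δ := mul_div_cancel₀ δ (ne_of_gt hC0)
  have h1 : (x + 1) ^ (2 * C) = ((x + 1) ^ (2:ℝ)) ^ C := by
    rw [← Real.rpow_mul (by linarith)]
  have h2 : (4 * x) ≤ (x + 1) ^ (2:ℝ) := by
    rw [Real.rpow_two]; nlinarith [sq_nonneg (x - 1)]
  have h3 : (4 * x) ^ C ≤ ((x + 1) ^ (2:ℝ)) ^ C :=
    Real.rpow_le_rpow (by linarith) h2 (le_of_lt hC0)
  have h4 : (4 * x) ^ C = (4:ℝ) ^ C * x ^ C :=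
    Real.mul_rpow (by norm_num) hx0
  have h5 : Real.exp C ≤ (4:ℝ) ^ C := by
    rw [← Real.exp_one_rpow C]
    exact Real.rpow_le_rpow (le_of_lt (Real.exp_pos 1))
      (by have := Real.exp_one_lt_d9; linarith) (le_of_lt hC0)
  have h6 : x ≤ x ^ C := by
    calc x = x ^ (1:ℝ) := (Real.rpow_one x).symm
    _ ≤ x ^ C := Real.rpow_le_rpow_of_exponent_le hx1 hC
  have h7 : Real.exp 1 * C ≤ Real.exp C := by
    have := Real.add_one_le_exp (C - 1)
    have h := Real.exp_le_exp.mpr (le_refl C)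
    calc Real.exp 1 * C ≤ Real.exp 1 * Real.exp (C - 1) := by
          have := Real.add_one_le_exp (C - 1)
          nlinarith [Real.exp_pos 1, Real.exp_pos (C-1)]
    _ = Real.exp C := by rw [← Real.exp_add]; ring_nf
  have hxC0 : 0 ≤ x ^ C := Real.rpow_nonneg hx0 C
  have : Real.exp 1 * C * x ≤ (4:ℝ) ^ C * x ^ C := by
    calc Real.exp 1 * C * x ≤ Real.exp C * x := by nlinarith
    _ ≤ (4:ℝ) ^ C * x ^ C := by nlinarith [Real.exp_pos C]
  rw [h1] at *
  calc δ * Real.exp 1 = Real.exp 1 * C * x := by rw [← hxδ]; ring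
  _ ≤ (4:ℝ) ^ C * x ^ C := this
  _ = (4 * x) ^ C := h4.symm
  _ ≤ ((x + 1) ^ (2:ℝ)) ^ C := h3
end

section
/- Let g : (-1,1) → ℝ be defined by g(M) = (1/√(2π(1−M²)))·exp(−(erf⁻¹(M))²), where erf⁻¹ is the inverse of the Gauss error function. Then for every M ∈ (−1,1), g(M) ≤ g(0) = 1/√(2π). -/
open MeasureTheory Set Real

noncomputable def erf (x : ℝ) : ℝ :=
  (2 / Real.sqrt Real.pi) * ∫ t in (0 : ℝ)..x, Real.exp (-t ^ 2)

lemma gauss_integrable : Integrable (fun t : ℝ => Real.exp (-t ^ 2)) := by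
  simpa using integrable_exp_neg_mul_sq one_pos

lemma gauss_shift_integrable (c : ℝ) :
    Integrable (fun s : ℝ => Real.exp (-(s + c) ^ 2)) := by
  simpa using (integrable_exp_neg_mul_sq one_pos).comp_add_right c

lemma shift (c : ℝ) :
    ∫ s in Set.Ioi (0 : ℝ), Real.exp (-(s + c) ^ 2)
      = ∫ t in Set.Ioi c, Real.exp (-t ^ 2) := by
  have h := (measurePreserving_add_right (volume : Measure ℝ) c).setIntegral_preimage_emb
    (Homeomorph.addRight c).measurableEmbedding (fun t => Real.exp (-t ^ 2)) (Set.Ioi c)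
  simpa [Set.preimage_add_const_Ioi] using h

lemma gauss_Ioi0 : ∫ t in Set.Ioi (0:ℝ), Real.exp (-t ^ 2) = Real.sqrt Real.pi / 2 := by
  simpa using integral_gaussian_Ioi 1

lemma gauss_Iic0 : ∫ t in Set.Iic (0:ℝ), Real.exp (-t ^ 2) = Real.sqrt Real.pi / 2 := by
  have h := integral_comp_neg_Iic (0:ℝ) (fun t => Real.exp (-t ^ 2))
  simp only [neg_zero, neg_sq] at h
  rw [h]
  simpa using integral_gaussian_Ioi 1

lemma gauss_Iic (y : ℝ) : ∫ t in Set.Iic y, Real.exp (-t ^ 2)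
    = Real.sqrt Real.pi / 2 + ∫ t in (0:ℝ)..y, Real.exp (-t ^ 2) := by
  have h := intervalIntegral.integral_Iic_sub_Iic
    (gauss_integrable.integrableOn (s := Set.Iic 0))
    (gauss_integrable.integrableOn (s := Set.Iic y))
  rw [gauss_Iic0] at h
  linarith [h]

lemma gauss_Ioi (y : ℝ) : ∫ t in Set.Ioi y, Real.exp (-t ^ 2)
    = Real.sqrt Real.pi / 2 - ∫ t in (0:ℝ)..y, Real.exp (-t ^ 2) := by
  have h := intervalIntegral.integral_Iic_add_Ioi (b := y) (μ := volume)
    (gauss_integrable.integrableOn) (gauss_integrable.integrableOn)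
  have hfull : ∫ t : ℝ, Real.exp (-t ^ 2) = Real.sqrt Real.pi := by
    simpa using integral_gaussian 1
  rw [gauss_Iic y, hfull] at h
  linarith [h]

lemma memL2_half (c : ℝ) :
    MemLp (fun s : ℝ => Real.exp (-(s + c) ^ 2 / 2)) (ENNReal.ofReal 2)
      (volume.restrict (Set.Ioi 0)) := by
  have h2 : (ENNReal.ofReal 2) = (2 : ENNReal) := by norm_num
  rw [h2]
  have hmeas : AEStronglyMeasurable (fun s : ℝ => Real.exp (-(s + c) ^ 2 / 2))
      (volume.restrict (Set.Ioi 0)) := by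
    exact (Real.continuous_exp.comp (by continuity)).aestronglyMeasurable
  refine (memLp_two_iff_integrable_sq hmeas).2 ?_
  have hint : Integrable (fun s : ℝ => Real.exp (-(s + c) ^ 2))
      (volume.restrict (Set.Ioi 0)) := (gauss_shift_integrable c).integrableOn
  refine hint.congr (Filter.Eventually.of_forall fun s => ?_)
  show Real.exp (-(s + c) ^ 2) = Real.exp (-(s + c) ^ 2 / 2) ^ 2
  rw [show Real.exp (-(s + c) ^ 2 / 2) ^ 2
      = Real.exp (-(s + c) ^ 2 / 2) * Real.exp (-(s + c) ^ 2 / 2) from sq _,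
    ← Real.exp_add]
  congr 1
  ring

lemma cs (y : ℝ) :
    (Real.exp (-y ^ 2) * (Real.sqrt Real.pi / 2)) ^ 2 ≤
      (∫ s in Set.Ioi (0:ℝ), Real.exp (-(s + y) ^ 2)) *
      (∫ s in Set.Ioi (0:ℝ), Real.exp (-(s + -y) ^ 2)) := by
  set μ := volume.restrict (Set.Ioi (0:ℝ))
  have hpq : Real.HolderConjugate 2 2 := Real.HolderConjugate.two_two
  have h := MeasureTheory.integral_mul_le_Lp_mul_Lq_of_nonneg (μ := μ) hpq
    (f := fun s : ℝ => Real.exp (-(s + y) ^ 2 / 2))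
    (g := fun s : ℝ => Real.exp (-(s + -y) ^ 2 / 2))
    (Filter.Eventually.of_forall fun s => (Real.exp_pos _).le)
    (Filter.Eventually.of_forall fun s => (Real.exp_pos _).le)
    (memL2_half y) (memL2_half (-y))
  have hmul : ∀ s : ℝ, Real.exp (-(s + y) ^ 2 / 2) * Real.exp (-(s + -y) ^ 2 / 2)
      = Real.exp (-y ^ 2) * Real.exp (-s ^ 2) := by
    intro s; rw [← Real.exp_add, ← Real.exp_add]; congr 1; ring
  have hpow : ∀ c s : ℝ, Real.exp (-(s + c) ^ 2 / 2) ^ (2:ℝ) = Real.exp (-(s + c) ^ 2) := by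
    intro c s; rw [← Real.exp_mul]; congr 1; ring
  simp only [hmul, hpow] at h
  rw [MeasureTheory.integral_const_mul, gauss_Ioi0] at h
  have hJ : 0 ≤ ∫ s in Set.Ioi (0:ℝ), Real.exp (-(s + y) ^ 2) :=
    integral_nonneg fun s => (Real.exp_pos _).le
  have hK : 0 ≤ ∫ s in Set.Ioi (0:ℝ), Real.exp (-(s + -y) ^ 2) :=
    integral_nonneg fun s => (Real.exp_pos _).le
  rw [← Real.mul_rpow hJ hK, ← Real.sqrt_eq_rpow] at h
  have hL : 0 ≤ Real.exp (-y ^ 2) * (Real.sqrt Real.pi / 2) := by positivity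
  exact (Real.le_sqrt hL (mul_nonneg hJ hK)).1 h

lemma key (y : ℝ) : Real.exp (-y ^ 2) ^ 2 ≤ (1 - erf y) * (1 + erf y) := by
  have h := cs y
  have hrefl : ∫ t in Set.Ioi (-y), Real.exp (-t ^ 2)
      = ∫ t in Set.Iic y, Real.exp (-t ^ 2) := by
    have h' := integral_comp_neg_Ioi (-y) (fun t => Real.exp (-t ^ 2))
    simpa using h'
  rw [shift y, shift (-y), hrefl, gauss_Ioi y, gauss_Iic y] at h
  set I := ∫ t in (0:ℝ)..y, Real.exp (-t ^ 2) with hI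
  have hπ : (0:ℝ) < Real.pi := Real.pi_pos
  have hsq : Real.sqrt Real.pi ^ 2 = Real.pi := Real.sq_sqrt hπ.le
  have hs : (0:ℝ) < Real.sqrt Real.pi := Real.sqrt_pos.2 hπ
  have he1 : 1 - erf y = (2 / Real.sqrt Real.pi) * (Real.sqrt Real.pi / 2 - I) := by
    rw [erf]; field_simp; rw [← hI]
  have he2 : 1 + erf y = (2 / Real.sqrt Real.pi) * (Real.sqrt Real.pi / 2 + I) := by
    rw [erf]; field_simp; rw [← hI]
  rw [he1, he2]
  rw [mul_pow] at h
  have h4 : (2 / Real.sqrt Real.pi) * (Real.sqrt Real.pi / 2 - I)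
      * ((2 / Real.sqrt Real.pi) * (Real.sqrt Real.pi / 2 + I))
      = (4 / Real.pi) * ((Real.sqrt Real.pi / 2 - I) * (Real.sqrt Real.pi / 2 + I)) := by
    field_simp
    linear_combination (-4 * (Real.sqrt Real.pi - 2 * I) * (Real.sqrt Real.pi + 2 * I)) * hsq
  rw [h4]
  have h5 : Real.exp (-y ^ 2) ^ 2 * (Real.sqrt Real.pi / 2) ^ 2
      = Real.exp (-y ^ 2) ^ 2 * Real.pi / 4 := by
    rw [div_pow, hsq]; ring
  rw [h5] at h
  have h6 := mul_le_mul_of_nonneg_left h (le_of_lt (by positivity : (0:ℝ) < 4 / Real.pi))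
  calc Real.exp (-y ^ 2) ^ 2
      = 4 / Real.pi * (Real.exp (-y ^ 2) ^ 2 * Real.pi / 4) := by field_simp
    _ ≤ _ := h6

theorem stmt_6 (M : ℝ) (hM : M ∈ Set.Ioo (-1 : ℝ) 1) (y : ℝ) (hy : erf y = M) :
    (1 / Real.sqrt (2 * Real.pi * (1 - M ^ 2))) * Real.exp (-(y ^ 2)) ≤
      1 / Real.sqrt (2 * Real.pi) := by
  have hπ : (0:ℝ) < Real.pi := Real.pi_pos
  have hkey : Real.exp (-y ^ 2) ^ 2 ≤ 1 - M ^ 2 := by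
    have h := key y
    rw [hy] at h
    nlinarith [h]
  have hm : (0:ℝ) < 1 - M ^ 2 := by nlinarith [hM.1, hM.2]
  have hsqrt : Real.exp (-y ^ 2) ≤ Real.sqrt (1 - M ^ 2) :=
    (Real.le_sqrt (Real.exp_pos _).le hm.le).2 hkey
  have hsplit : Real.sqrt (2 * Real.pi * (1 - M ^ 2))
      = Real.sqrt (2 * Real.pi) * Real.sqrt (1 - M ^ 2) := Real.sqrt_mul (by positivity) _
  have h2π : (0:ℝ) < Real.sqrt (2 * Real.pi) := Real.sqrt_pos.2 (by positivity)
  have hm' : (0:ℝ) < Real.sqrt (1 - M ^ 2) := Real.sqrt_pos.2 hm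
  rw [hsplit]
  have hdiv : Real.exp (-(y ^ 2)) / Real.sqrt (1 - M ^ 2) ≤ 1 :=
    (div_le_one hm').2 (by simpa using hsqrt)
  calc (1 / (Real.sqrt (2 * Real.pi) * Real.sqrt (1 - M ^ 2))) * Real.exp (-(y ^ 2))
      = (1 / Real.sqrt (2 * Real.pi)) * (Real.exp (-(y ^ 2)) / Real.sqrt (1 - M ^ 2)) := by
        ring
    _ ≤ (1 / Real.sqrt (2 * Real.pi)) * 1 := by
        exact mul_le_mul_of_nonneg_left hdiv (by positivity)
    _ = 1 / Real.sqrt (2 * Real.pi) := mul_one _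
end

section
/- For all x < 0, erf(x)·exp((4/π − 4/3)x²) ≥ (2x/√π), and consequently the function g(M) = (1/√(2π(1−M²)))·exp(−(erf⁻¹(M))²) is increasing on (−1, 0). -/
open Real MeasureTheory intervalIntegral Set Filter Topology

noncomputable def G (a : ℝ) : ℝ := Real.exp (-a ^ 2) / (a + Real.sqrt (a ^ 2 + 2))

lemma s_pos (a : ℝ) : 0 < Real.sqrt (a ^ 2 + 2) := Real.sqrt_pos.mpr (by positivity)

lemma s_sq (a : ℝ) : Real.sqrt (a ^ 2 + 2) ^ 2 = a ^ 2 + 2 := Real.sq_sqrt (by positivity)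

lemma D_pos (a : ℝ) : 0 < a + Real.sqrt (a ^ 2 + 2) := by
  have h1 := s_pos a
  have h2 := s_sq a
  nlinarith [abs_nonneg a, sq_abs a, abs_le_abs (le_refl a), neg_abs_le a, le_abs_self a]

lemma hasDerivAt_s (a : ℝ) :
    HasDerivAt (fun a : ℝ => Real.sqrt (a ^ 2 + 2))
      (1 / (2 * Real.sqrt (a ^ 2 + 2)) * (2 * a)) a := by
  have h1 : HasDerivAt (fun a : ℝ => a ^ 2 + 2) (2 * a) a := by
    simpa using (hasDerivAt_pow 2 a).add_const 2
  exact (Real.hasDerivAt_sqrt (by positivity)).comp a h1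

lemma hasDerivAt_expneg (a : ℝ) :
    HasDerivAt (fun a : ℝ => Real.exp (-a ^ 2)) (Real.exp (-a ^ 2) * (-(2 * a))) a := by
  have h1 : HasDerivAt (fun a : ℝ => -a ^ 2) (-(2 * a)) a := by
    exact ((hasDerivAt_pow 2 a).neg).congr_deriv (by norm_num)
  exact h1.exp

lemma hasDerivAt_G (a : ℝ) :
    HasDerivAt G
      ((Real.exp (-a ^ 2) * (-(2 * a)) * (a + Real.sqrt (a ^ 2 + 2)) -
        Real.exp (-a ^ 2) * (1 + 1 / (2 * Real.sqrt (a ^ 2 + 2)) * (2 * a))) /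
        (a + Real.sqrt (a ^ 2 + 2)) ^ 2) a := by
  exact (hasDerivAt_expneg a).div ((hasDerivAt_id a).add (hasDerivAt_s a)) (D_pos a).ne'

lemma Kderiv_pos {a : ℝ} (ha : 0 ≤ a) :
    0 < Real.exp (-a ^ 2) +
      (Real.exp (-a ^ 2) * (-(2 * a)) * (a + Real.sqrt (a ^ 2 + 2)) -
        Real.exp (-a ^ 2) * (1 + 1 / (2 * Real.sqrt (a ^ 2 + 2)) * (2 * a))) /
        (a + Real.sqrt (a ^ 2 + 2)) ^ 2 := by
  set s := Real.sqrt (a ^ 2 + 2) with hs_def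
  have hs : 0 < s := s_pos a
  have hs2 : s ^ 2 = a ^ 2 + 2 := s_sq a
  have hD : 0 < a + s := D_pos a
  have has : a < s := by nlinarith
  have ht : 1 / (2 * s) * (2 * a) = a / s := by field_simp
  rw [ht]
  have hts : a / s < 1 := (div_lt_one hs).mpr has
  have hE : 0 < Real.exp (-a ^ 2) := Real.exp_pos _
  have h : -Real.exp (-a ^ 2) * (a + s) ^ 2 <
      Real.exp (-a ^ 2) * (-(2 * a)) * (a + s) - Real.exp (-a ^ 2) * (1 + a / s) := by
    nlinarith [mul_pos hE (sub_pos.mpr hts)]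
  have h2 : -Real.exp (-a ^ 2) <
      (Real.exp (-a ^ 2) * (-(2 * a)) * (a + s) - Real.exp (-a ^ 2) * (1 + a / s)) /
        (a + s) ^ 2 := by
    rw [lt_div_iff₀ (by positivity)]
    linarith
  linarith

lemma cont_g : Continuous (fun t : ℝ => Real.exp (-t ^ 2)) := by continuity

lemma ii_g (a b : ℝ) : IntervalIntegrable (fun t : ℝ => Real.exp (-t ^ 2)) volume a b :=
  cont_g.intervalIntegrable a b

lemma hasDerivAt_I (x : ℝ) :
    HasDerivAt (fun u : ℝ => ∫ t in (0:ℝ)..u, Real.exp (-t ^ 2)) (Real.exp (-x ^ 2)) x :=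
  intervalIntegral.integral_hasDerivAt_right (ii_g 0 x)
    (cont_g.stronglyMeasurableAtFilter _ _) cont_g.continuousAt

noncomputable def K (a : ℝ) : ℝ := (∫ t in (0:ℝ)..a, Real.exp (-t ^ 2)) + G a

lemma hasDerivAt_K (a : ℝ) :
    HasDerivAt K
      (Real.exp (-a ^ 2) +
        (Real.exp (-a ^ 2) * (-(2 * a)) * (a + Real.sqrt (a ^ 2 + 2)) -
          Real.exp (-a ^ 2) * (1 + 1 / (2 * Real.sqrt (a ^ 2 + 2)) * (2 * a))) /
          (a + Real.sqrt (a ^ 2 + 2)) ^ 2) a :=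
  (hasDerivAt_I a).add (hasDerivAt_G a)

lemma K_strictMono : StrictMonoOn K (Ici 0) := by
  apply strictMonoOn_of_deriv_pos (convex_Ici 0)
    ((Differentiable.continuous (fun x => (hasDerivAt_K x).differentiableAt)).continuousOn)
  intro x hx
  rw [interior_Ici] at hx
  rw [(hasDerivAt_K x).deriv]
  exact Kderiv_pos hx.le

lemma tendsto_I :
    Tendsto (fun a : ℝ => ∫ t in (0:ℝ)..a, Real.exp (-t ^ 2)) atTop
      (𝓝 (Real.sqrt Real.pi / 2)) := by
  have hint : IntegrableOn (fun t : ℝ => Real.exp (-t ^ 2)) (Ioi 0) := by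
    have := (integrable_exp_neg_mul_sq (one_pos (α := ℝ))).integrableOn (s := Ioi 0)
    simpa using this
  have h := intervalIntegral_tendsto_integral_Ioi 0 hint tendsto_id
  have hval : (∫ x in Ioi (0:ℝ), Real.exp (-x ^ 2)) = Real.sqrt Real.pi / 2 := by
    have := integral_gaussian_Ioi 1
    simpa using this
  rwa [hval] at h

lemma tendsto_G : Tendsto G atTop (𝓝 0) := by
  have hexp : Tendsto (fun a : ℝ => Real.exp (-a ^ 2)) atTop (𝓝 0) := by
    have h1 : Tendsto (fun a : ℝ => a ^ 2) atTop atTop := tendsto_pow_atTop two_ne_zero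
    exact Real.tendsto_exp_neg_atTop_nhds_zero.comp h1
  apply squeeze_zero' (Eventually.of_forall fun a => (div_pos (Real.exp_pos _) (D_pos a)).le)
    ?_ hexp
  filter_upwards [eventually_ge_atTop (0:ℝ)] with a ha
  have hs2 := s_sq a
  have hs := s_pos a
  have hD1 : 1 ≤ a + Real.sqrt (a ^ 2 + 2) := by nlinarith
  rw [div_le_iff₀ (by linarith)]
  nlinarith [Real.exp_pos (-a ^ 2)]

lemma tendsto_K : Tendsto K atTop (𝓝 (Real.sqrt Real.pi / 2)) := by
  have := tendsto_I.add tendsto_G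
  rw [add_zero] at this; exact this

lemma K_lt {a : ℝ} (ha : 0 < a) : K a < Real.sqrt Real.pi / 2 := by
  have h1 : K a < K (a + 1) := K_strictMono ha.le (by simp; linarith) (by linarith)
  have h2 : K (a + 1) ≤ Real.sqrt Real.pi / 2 := by
    apply ge_of_tendsto tendsto_K
    filter_upwards [eventually_ge_atTop (a + 1)] with x hx
    exact K_strictMono.monotoneOn (by simp; linarith) (by simp; linarith [ha.le]) hx
  linarith

lemma sqrt_pi_pos : 0 < Real.sqrt Real.pi := Real.sqrt_pos.mpr Real.pi_pos

lemma erf_strictMono : StrictMono erf := by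
  have h : ∀ x, 0 < 2 / Real.sqrt Real.pi * Real.exp (-x ^ 2) := fun x =>
    mul_pos (div_pos two_pos sqrt_pi_pos) (Real.exp_pos _)
  exact strictMono_of_hasDerivAt_pos (fun x => (hasDerivAt_I x).const_mul _) h

lemma erf_zero : erf 0 = 0 := by simp [erf]

lemma erf_neg (x : ℝ) : erf (-x) = -erf x := by
  have h := intervalIntegral.integral_comp_neg (a := (0:ℝ)) (b := -x)
    (f := fun t : ℝ => Real.exp (-t ^ 2))
  simp only [neg_zero, neg_neg, neg_sq] at h
  rw [erf, erf, h, intervalIntegral.integral_symm]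
  ring

lemma erf_pos {a : ℝ} (ha : 0 < a) : 0 < erf a := by
  have := erf_strictMono ha; rwa [erf_zero] at this

lemma I_le {a : ℝ} (ha : 0 ≤ a) : (∫ t in (0:ℝ)..a, Real.exp (-t ^ 2)) ≤ a := by
  have h1 : (∫ t in (0:ℝ)..a, Real.exp (-t ^ 2)) ≤ ∫ t in (0:ℝ)..a, (1:ℝ) := by
    apply intervalIntegral.integral_mono_on ha (ii_g 0 a) intervalIntegrable_const
    intro t _
    exact Real.exp_le_one_iff.mpr (by nlinarith [sq_nonneg t])
  simpa using h1

lemma erf_mul_sqrt_pi_le {a : ℝ} (ha : 0 ≤ a) : erf a * Real.sqrt Real.pi ≤ 2 * a := by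
  have h := I_le ha
  have hsp := sqrt_pi_pos
  rw [erf, div_mul_eq_mul_div, div_mul_cancel₀ _ hsp.ne']
  linarith

lemma I_eq_erf (a : ℝ) :
    (∫ t in (0:ℝ)..a, Real.exp (-t ^ 2)) = erf a * Real.sqrt Real.pi / 2 := by
  rw [erf, div_mul_eq_mul_div, div_mul_cancel₀ _ sqrt_pi_pos.ne']
  ring

lemma key_ineq {a : ℝ} (ha : 0 < a) :
    erf a * Real.exp (-a ^ 2) < Real.sqrt Real.pi * a * (1 - erf a ^ 2) := by
  have hI : (∫ t in (0:ℝ)..a, Real.exp (-t ^ 2)) = erf a * Real.sqrt Real.pi / 2 :=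
    I_eq_erf a
  set sp := Real.sqrt Real.pi with hsp_def
  set s := Real.sqrt (a ^ 2 + 2) with hs_def
  set X := Real.exp (-a ^ 2) with hX_def
  set E := erf a with hE_def
  have hsp : 0 < sp := sqrt_pi_pos
  have hsp2 : sp ^ 2 = Real.pi := Real.sq_sqrt Real.pi_pos.le
  have hpi : Real.pi > 3 := Real.pi_gt_three
  have hs : 0 < s := s_pos a
  have hs2 : s ^ 2 = a ^ 2 + 2 := s_sq a
  have hD : 0 < a + s := D_pos a
  have hX : 0 < X := Real.exp_pos _
  have hE : 0 < E := erf_pos ha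
  have hEsp : E * sp ≤ 2 * a := erf_mul_sqrt_pi_le ha.le
  have hKlt := K_lt ha
  rw [K, hI, show G a = X / (a + s) from rfl] at hKlt
  have h0 : X / (a + s) < sp / 2 * (1 - E) := by nlinarith
  have hXlt : X < sp / 2 * (1 - E) * (a + s) := by
    rw [div_lt_iff₀ hD] at h0; exact h0
  have h1E : 0 < 1 - E := by nlinarith [mul_pos hsp hD]
  have hEsq : E ^ 2 * Real.pi ≤ 4 * a ^ 2 := by
    nlinarith [mul_nonneg (sub_nonneg.mpr hEsp) (by positivity : (0:ℝ) ≤ 2 * a + E * sp)]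
  have hsq : (E * s) ^ 2 ≤ (a * (2 + E)) ^ 2 := by
    nlinarith [hEsq, hpi, sq_nonneg E, mul_nonneg (mul_nonneg ha.le ha.le) hE.le]
  have hB : E * (a + s) ≤ 2 * a * (1 + E) := by
    nlinarith [hsq, (by positivity : (0:ℝ) ≤ E * s + a * (2 + E))]
  calc E * X < E * (sp / 2 * (1 - E) * (a + s)) := by
        exact mul_lt_mul_of_pos_left hXlt hE
    _ = sp / 2 * (1 - E) * (E * (a + s)) := by ring
    _ ≤ sp / 2 * (1 - E) * (2 * a * (1 + E)) := by
        exact mul_le_mul_of_nonneg_left hB (by positivity)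
    _ = sp * a * (1 - E ^ 2) := by ring

lemma one_sub_sq_pos {z : ℝ} (hz : z < 0) : 0 < 1 - erf z ^ 2 := by
  have ha : 0 < -z := by linarith
  have hk := key_ineq ha
  have h1 : 0 < erf (-z) * Real.exp (-(-z) ^ 2) :=
    mul_pos (erf_pos ha) (Real.exp_pos _)
  have h2 : 0 < Real.sqrt Real.pi * (-z) * (1 - erf (-z) ^ 2) := lt_trans h1 hk
  have h3 : 0 < 1 - erf (-z) ^ 2 := by
    by_contra h
    push_neg at h
    nlinarith [mul_pos sqrt_pi_pos ha]
  have h4 : erf (-z) ^ 2 = erf z ^ 2 := by rw [show -z = -z from rfl, erf_neg]; ring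
  linarith [h4 ▸ h3]

noncomputable def F (z : ℝ) : ℝ := Real.exp (-2 * z ^ 2) / (1 - erf z ^ 2)

lemma hasDerivAt_F {z : ℝ} (hz : 1 - erf z ^ 2 ≠ 0) :
    HasDerivAt F
      ((Real.exp (-2 * z ^ 2) * (-(4 * z)) * (1 - erf z ^ 2) -
        Real.exp (-2 * z ^ 2) *
          (0 - 2 * erf z ^ 1 * (2 / Real.sqrt Real.pi * Real.exp (-z ^ 2)))) /
        (1 - erf z ^ 2) ^ 2) z := by
  have hN : HasDerivAt (fun z : ℝ => Real.exp (-2 * z ^ 2))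
      (Real.exp (-2 * z ^ 2) * (-(4 * z))) z := by
    have h1 : HasDerivAt (fun z : ℝ => -2 * z ^ 2) (-(4 * z)) z := by
      have := (hasDerivAt_pow 2 z).const_mul (-2 : ℝ)
      simpa using this.congr_deriv (by ring)
    exact h1.exp
  have hDn : HasDerivAt (fun z : ℝ => 1 - erf z ^ 2)
      (0 - 2 * erf z ^ 1 * (2 / Real.sqrt Real.pi * Real.exp (-z ^ 2))) z := by
    have he : HasDerivAt erf (2 / Real.sqrt Real.pi * Real.exp (-z ^ 2)) z :=
      (hasDerivAt_I z).const_mul _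
    have h2 := he.pow 2
    exact ((hasDerivAt_const z (1:ℝ)).sub h2).congr_deriv (by norm_num)
  exact hN.div hDn hz

lemma F_deriv_pos {z : ℝ} (hz : z < 0) :
    0 < (Real.exp (-2 * z ^ 2) * (-(4 * z)) * (1 - erf z ^ 2) -
        Real.exp (-2 * z ^ 2) *
          (0 - 2 * erf z ^ 1 * (2 / Real.sqrt Real.pi * Real.exp (-z ^ 2)))) /
        (1 - erf z ^ 2) ^ 2 := by
  have hden : 0 < 1 - erf z ^ 2 := one_sub_sq_pos hz
  apply div_pos _ (by positivity)
  have ha : 0 < -z := by linarith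
  have hk := key_ineq ha
  have hsp := sqrt_pi_pos
  have herf : erf z = -erf (-z) := by rw [erf_neg]; ring
  have hz2 : (-z) ^ 2 = z ^ 2 := by ring
  rw [hz2] at hk
  have hE2 : erf (-z) ^ 2 = erf z ^ 2 := by rw [herf]; ring
  rw [hE2] at hk
  -- hk : erf (-z) * exp (-z^2) < √π * (-z) * (1 - erf z ^ 2)
  have hexp2 : 0 < Real.exp (-2 * z ^ 2) := Real.exp_pos _
  have key2 : 0 < -(4 * z) * (1 - erf z ^ 2) +
      2 * erf z * (2 / Real.sqrt Real.pi * Real.exp (-z ^ 2)) := by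
    have h4 : (4 : ℝ) / Real.sqrt Real.pi > 0 := by positivity
    -- goal: 0 < 4(-z)(1-E²) - (4/√π) erf(-z) exp(-z²)  roughly
    have h5 : 4 / Real.sqrt Real.pi * (erf (-z) * Real.exp (-z ^ 2)) <
        4 / Real.sqrt Real.pi * (Real.sqrt Real.pi * (-z) * (1 - erf z ^ 2)) :=
      mul_lt_mul_of_pos_left hk h4
    have h6 : 4 / Real.sqrt Real.pi * (Real.sqrt Real.pi * (-z) * (1 - erf z ^ 2)) =
        4 * (-z) * (1 - erf z ^ 2) := by
      field_simp
    rw [h6] at h5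
    have h7 : 2 * erf z * (2 / Real.sqrt Real.pi * Real.exp (-z ^ 2)) =
        -(4 / Real.sqrt Real.pi * (erf (-z) * Real.exp (-z ^ 2))) := by
      rw [herf]; ring
    rw [h7]
    linarith [h5]
  nlinarith [mul_pos hexp2 key2, Real.exp_pos (-z^2), hexp2]

lemma F_strictMono : StrictMonoOn F (Iio (0:ℝ)) := by
  apply strictMonoOn_of_deriv_pos (convex_Iio 0)
  · intro z hz
    exact ((hasDerivAt_F (one_sub_sq_pos hz).ne').differentiableAt).continuousAt.continuousWithinAt
  · intro z hz
    rw [interior_Iio] at hz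
    rw [(hasDerivAt_F (one_sub_sq_pos hz).ne').deriv]
    exact F_deriv_pos hz

lemma part2 : ∀ M₁ M₂ : ℝ, M₁ ∈ Set.Ioo (-1 : ℝ) 0 → M₂ ∈ Set.Ioo (-1 : ℝ) 0 → M₁ < M₂ →
    ∀ y₁ y₂ : ℝ, erf y₁ = M₁ → erf y₂ = M₂ →
    (1 / Real.sqrt (2 * Real.pi * (1 - M₁ ^ 2))) * Real.exp (-(y₁ ^ 2)) <
      (1 / Real.sqrt (2 * Real.pi * (1 - M₂ ^ 2))) * Real.exp (-(y₂ ^ 2)) := by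
  intro M₁ M₂ hM₁ hM₂ hM y₁ y₂ hy₁ hy₂
  have hy1neg : y₁ < 0 := by
    by_contra h
    push_neg at h
    have : erf 0 ≤ erf y₁ := erf_strictMono.monotone h
    rw [erf_zero, hy₁] at this
    exact absurd this (not_le.mpr hM₁.2)
  have hy2neg : y₂ < 0 := by
    by_contra h
    push_neg at h
    have : erf 0 ≤ erf y₂ := erf_strictMono.monotone h
    rw [erf_zero, hy₂] at this
    exact absurd this (not_le.mpr hM₂.2)
  have hy12 : y₁ < y₂ := by
    have : erf y₁ < erf y₂ := by rw [hy₁, hy₂]; exact hM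
    exact erf_strictMono.lt_iff_lt.mp this
  have hF := F_strictMono hy1neg hy2neg hy12
  rw [F, F, hy₁, hy₂] at hF
  have h1 : 0 < 1 - M₁ ^ 2 := by nlinarith [hM₁.1, hM₁.2]
  have h2 : 0 < 1 - M₂ ^ 2 := by nlinarith [hM₂.1, hM₂.2]
  have hpi := Real.pi_pos
  set g₁ := (1 / Real.sqrt (2 * Real.pi * (1 - M₁ ^ 2))) * Real.exp (-(y₁ ^ 2)) with hg1
  set g₂ := (1 / Real.sqrt (2 * Real.pi * (1 - M₂ ^ 2))) * Real.exp (-(y₂ ^ 2)) with hg2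
  have hg1pos : 0 < g₁ := by
    rw [hg1]; positivity
  have hg2pos : 0 < g₂ := by
    rw [hg2]; positivity
  have hsq : ∀ (M y : ℝ), 0 < 1 - M ^ 2 →
      ((1 / Real.sqrt (2 * Real.pi * (1 - M ^ 2))) * Real.exp (-(y ^ 2))) ^ 2 =
        Real.exp (-2 * y ^ 2) / (1 - M ^ 2) / (2 * Real.pi) := by
    intro M y hMp
    have hX : (0:ℝ) < 2 * Real.pi * (1 - M ^ 2) := by positivity
    have hexp : Real.exp (-(y ^ 2)) ^ 2 = Real.exp (-2 * y ^ 2) := by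
      rw [sq, ← Real.exp_add]; ring_nf
    rw [mul_pow, div_pow, one_pow, Real.sq_sqrt hX.le, hexp]
    field_simp
  have e1 : g₁ ^ 2 = Real.exp (-2 * y₁ ^ 2) / (1 - M₁ ^ 2) / (2 * Real.pi) := hsq M₁ y₁ h1
  have e2 : g₂ ^ 2 = Real.exp (-2 * y₂ ^ 2) / (1 - M₂ ^ 2) / (2 * Real.pi) := hsq M₂ y₂ h2
  have hsqlt : g₁ ^ 2 < g₂ ^ 2 := by
    rw [e1, e2]
    gcongr
  exact lt_of_pow_lt_pow_left₀ 2 hg2pos.le hsqlt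

lemma erf_neg_of_neg {x : ℝ} (hx : x < 0) : erf x < 0 := by
  have := erf_strictMono hx; rwa [erf_zero] at this

lemma I_ge (x : ℝ) (hx : x < 0) : x ≤ ∫ t in (0:ℝ)..x, Real.exp (-t ^ 2) := by
  rw [intervalIntegral.integral_symm]
  have h1 : (∫ t in x..(0:ℝ), Real.exp (-t ^ 2)) ≤ ∫ t in x..(0:ℝ), (1:ℝ) := by
    apply intervalIntegral.integral_mono_on hx.le (ii_g x 0)
      (intervalIntegrable_const)
    intro t _
    exact Real.exp_le_one_iff.mpr (by nlinarith [sq_nonneg t])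
  simp at h1
  linarith

lemma part1 : ∀ x : ℝ, x < 0 →
    erf x * Real.exp ((4 / Real.pi - 4 / 3) * x ^ 2) ≥ 2 * x / Real.sqrt Real.pi := by
  intro x hx
  have hE : erf x < 0 := erf_neg_of_neg hx
  have hexp : Real.exp ((4 / Real.pi - 4 / 3) * x ^ 2) ≤ 1 := by
    apply Real.exp_le_one_iff.mpr
    have hc : 4 / Real.pi - 4 / 3 < 0 := by
      have := Real.pi_gt_three
      have h4 : 4 / Real.pi < 4 / 3 := by
        apply div_lt_div_of_pos_left (by norm_num) (by norm_num) this
      linarith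
    nlinarith [sq_nonneg x]
  have h1 : erf x ≤ erf x * Real.exp ((4 / Real.pi - 4 / 3) * x ^ 2) := by
    nlinarith [Real.exp_pos ((4 / Real.pi - 4 / 3) * x ^ 2)]
  have h2 : 2 * x / Real.sqrt Real.pi ≤ erf x := by
    rw [erf, div_mul_eq_mul_div, div_le_div_iff₀ sqrt_pi_pos sqrt_pi_pos] at *
    have := I_ge x hx
    nlinarith [sqrt_pi_pos]
  linarith

theorem stmt_7 :
    (∀ x : ℝ, x < 0 →
      erf x * Real.exp ((4 / Real.pi - 4 / 3) * x ^ 2) ≥ 2 * x / Real.sqrt Real.pi) ∧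
    (∀ M₁ M₂ : ℝ, M₁ ∈ Set.Ioo (-1 : ℝ) 0 → M₂ ∈ Set.Ioo (-1 : ℝ) 0 → M₁ < M₂ →
      ∀ y₁ y₂ : ℝ, erf y₁ = M₁ → erf y₂ = M₂ →
      (1 / Real.sqrt (2 * Real.pi * (1 - M₁ ^ 2))) * Real.exp (-(y₁ ^ 2)) <
        (1 / Real.sqrt (2 * Real.pi * (1 - M₂ ^ 2))) * Real.exp (-(y₂ ^ 2))) :=
  ⟨part1, part2⟩
end

section
/- For all real x, erf(x)² < 1 − exp(−4x²/π) when x ≠ 0; equivalently 1 − erf(x)² > exp(−4x²/π). -/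
open Real MeasureTheory intervalIntegral Set

namespace PolyaAux

noncomputable def g (x : ℝ) : ℝ := ∫ t in (0 : ℝ)..x, Real.exp (-t ^ 2)

noncomputable def Q (x : ℝ) : ℝ :=
  ∫ t in (0 : ℝ)..1, Real.exp (-x ^ 2 * (1 + t ^ 2)) / (1 + t ^ 2)

lemma cont_gauss : Continuous fun t : ℝ => Real.exp (-t ^ 2) := by
  exact (continuous_pow 2).neg.rexp

lemma g_hasDeriv (x : ℝ) : HasDerivAt g (Real.exp (-x ^ 2)) x := by
  exact intervalIntegral.integral_hasDerivAt_right
    (cont_gauss.intervalIntegrable _ _)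
    (cont_gauss.stronglyMeasurableAtFilter _ _)
    cont_gauss.continuousAt

lemma one_add_sq_pos (t : ℝ) : (0 : ℝ) < 1 + t ^ 2 := by positivity

lemma cont_Fx (x : ℝ) : Continuous fun t : ℝ =>
    Real.exp (-x ^ 2 * (1 + t ^ 2)) / (1 + t ^ 2) := by
  apply Continuous.div
  · exact ((continuous_const.mul (continuous_const.add (continuous_pow 2)))).rexp
  · exact continuous_const.add (continuous_pow 2)
  · intro t; exact (one_add_sq_pos t).ne'

lemma Q_hasDeriv (x : ℝ) :
    HasDerivAt Q (∫ t in (0:ℝ)..1, Real.exp (-x ^ 2 * (1 + t ^ 2)) * (-2 * x)) x := by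
  have key := intervalIntegral.hasDerivAt_integral_of_dominated_loc_of_deriv_le
    (F := fun x t => Real.exp (-x ^ 2 * (1 + t ^ 2)) / (1 + t ^ 2))
    (F' := fun x t => Real.exp (-x ^ 2 * (1 + t ^ 2)) * (-2 * x))
    (x₀ := x) (a := (0:ℝ)) (b := 1) (μ := volume)
    (bound := fun _ => 2 * (|x| + 1)) (s := Metric.ball x 1) (Metric.ball_mem_nhds x one_pos)
    ?_ ?_ ?_ ?_ ?_ ?_
  · exact key.2
  · filter_upwards with y
    exact (cont_Fx y).aestronglyMeasurable
  · exact (cont_Fx x).intervalIntegrable _ _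
  · exact ((((continuous_const.mul (continuous_const.add (continuous_pow 2)))).rexp).mul
      continuous_const).aestronglyMeasurable
  · filter_upwards with t _ y hy
    have h1 : Real.exp (-y ^ 2 * (1 + t ^ 2)) ≤ 1 := by
      apply Real.exp_le_one_iff.2
      have := one_add_sq_pos t
      nlinarith [sq_nonneg y]
    have h2 : |y| ≤ |x| + 1 := by
      have := mem_ball_iff_norm.1 hy
      have : |y - x| < 1 := this
      calc |y| = |x + (y - x)| := by ring_nf
        _ ≤ |x| + |y - x| := abs_add_le _ _
        _ ≤ |x| + 1 := by linarith
    have hexp : (0:ℝ) < Real.exp (-y ^ 2 * (1 + t ^ 2)) := Real.exp_pos _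
    rw [Real.norm_eq_abs, abs_mul]
    rw [abs_of_pos hexp]
    calc Real.exp (-y ^ 2 * (1 + t ^ 2)) * |(-2 * y)| ≤ 1 * |(-2 * y)| := by
          apply mul_le_mul_of_nonneg_right h1 (abs_nonneg _)
      _ = 2 * |y| := by rw [abs_mul, abs_neg, abs_two, one_mul]
      _ ≤ 2 * (|x| + 1) := by linarith
  · exact intervalIntegrable_const
  · filter_upwards with t _ y _
    have h : HasDerivAt (fun y : ℝ => -y ^ 2 * (1 + t ^ 2)) (-2 * y * (1 + t ^ 2)) y := by
      have := ((hasDerivAt_pow 2 y).neg).mul_const (1 + t ^ 2)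
      simpa using this.congr_deriv (by ring)
    have := (h.exp).div_const (1 + t ^ 2)
    refine this.congr_deriv ?_
    field_simp

lemma Q_deriv_eq (x : ℝ) :
    HasDerivAt Q (-2 * Real.exp (-x ^ 2) * g x) x := by
  have h := Q_hasDeriv x
  have h2' : (x * ∫ t in (0:ℝ)..1, Real.exp (-(x * t) ^ 2)) = g x := by
    have := intervalIntegral.mul_integral_comp_mul_left
      (a := (0:ℝ)) (b := 1) (c := x) (f := fun u => Real.exp (-u ^ 2))
    simpa only [mul_zero, mul_one, g] using this
  have h1 : ∀ t : ℝ, Real.exp (-x ^ 2 * (1 + t ^ 2)) * (-2 * x)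
      = (-2 * Real.exp (-x ^ 2)) * (x * Real.exp (-(x * t) ^ 2)) := by
    intro t
    have he : Real.exp (-x ^ 2 * (1 + t ^ 2))
        = Real.exp (-x ^ 2) * Real.exp (-(x * t) ^ 2) := by
      rw [← Real.exp_add]; congr 1; ring
    rw [he]; ring
  have key : (∫ t in (0:ℝ)..1, Real.exp (-x ^ 2 * (1 + t ^ 2)) * (-2 * x))
      = -2 * Real.exp (-x ^ 2) * g x := by
    calc (∫ t in (0:ℝ)..1, Real.exp (-x ^ 2 * (1 + t ^ 2)) * (-2 * x))
        = ∫ t in (0:ℝ)..1, (-2 * Real.exp (-x ^ 2)) * (x * Real.exp (-(x * t) ^ 2)) :=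
          intervalIntegral.integral_congr (fun t _ => h1 t)
      _ = (-2 * Real.exp (-x ^ 2)) * ∫ t in (0:ℝ)..1, x * Real.exp (-(x * t) ^ 2) :=
          intervalIntegral.integral_const_mul _ _
      _ = (-2 * Real.exp (-x ^ 2)) * (x * ∫ t in (0:ℝ)..1, Real.exp (-(x * t) ^ 2)) := by
          rw [intervalIntegral.integral_const_mul]
      _ = -2 * Real.exp (-x ^ 2) * g x := by rw [h2']
  rw [key] at h
  exact h

lemma c_sq : (2 / Real.sqrt Real.pi) ^ 2 = 4 / Real.pi := by
  rw [div_pow, Real.sq_sqrt Real.pi_pos.le]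
  norm_num

lemma erf_eq (x : ℝ) : erf x = (2 / Real.sqrt Real.pi) * g x := rfl

lemma P_hasDeriv (x : ℝ) :
    HasDerivAt (fun y => Real.pi / 4 * (1 - erf y ^ 2)) (-2 * Real.exp (-x ^ 2) * g x) x := by
  have herf : HasDerivAt erf ((2 / Real.sqrt Real.pi) * Real.exp (-x ^ 2)) x :=
    (g_hasDeriv x).const_mul _
  have h : HasDerivAt (fun y => Real.pi / 4 * (1 - erf y ^ 2)) _ x :=
    ((herf.pow 2).const_sub 1).const_mul (Real.pi / 4)
  convert h using 1
  have hc := c_sq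
  have hπ : Real.pi ≠ 0 := Real.pi_ne_zero
  rw [erf_eq]
  norm_num
  field_simp at hc ⊢
  rw [← hc]

lemma QP (x : ℝ) : Q x = Real.pi / 4 * (1 - erf x ^ 2) := by
  have hd : ∀ y : ℝ, HasDerivAt (fun y => Q y - Real.pi / 4 * (1 - erf y ^ 2)) 0 y := by
    intro y
    have := (Q_deriv_eq y).sub (P_hasDeriv y)
    simp at this
    exact this
  have hconst := is_const_of_deriv_eq_zero
    (f := fun y => Q y - Real.pi / 4 * (1 - erf y ^ 2))
    (fun y => (hd y).differentiableAt) (fun y => (hd y).deriv) x 0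
  have hQ0 : Q 0 = Real.pi / 4 := by
    unfold Q
    simp only [ne_eq, OfNat.ofNat_ne_zero, not_false_eq_true, zero_pow, neg_zero, zero_mul,
      Real.exp_zero]
    rw [show (∫ t in (0:ℝ)..1, 1 / (1 + t ^ 2)) = Real.arctan 1 - Real.arctan 0 from
      integral_one_div_one_add_sq]
    rw [Real.arctan_one, Real.arctan_zero]
    ring
  have herf0 : erf 0 = 0 := by
    rw [erf_eq]
    unfold g
    simp
  have h0 : Q 0 - Real.pi / 4 * (1 - erf 0 ^ 2) = 0 := by
    rw [hQ0, herf0]; ring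
  have := hconst
  linarith [this, h0.symm ▸ this]

lemma pi_facts : 0 < 4 / Real.pi - 1 ∧ 4 / Real.pi - 1 < 1 := by
  have h1 : Real.pi < 4 := Real.pi_lt_four
  have h2 : 3 < Real.pi := Real.pi_gt_three
  have h3 : 0 < Real.pi := Real.pi_pos
  constructor
  · rw [sub_pos, lt_div_iff₀ h3]; linarith
  · rw [sub_lt_iff_lt_add, div_lt_iff₀ h3]; linarith

lemma Q_gt (x : ℝ) (hx : x ≠ 0) :
    Real.pi / 4 * Real.exp (-4 * x ^ 2 / Real.pi) < Q x := by
  set E := Real.exp (-4 * x ^ 2 / Real.pi) with hE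
  have hEpos : 0 < E := Real.exp_pos _
  set φ : ℝ → ℝ := fun t => E * (1 + 4 * x ^ 2 / Real.pi - x ^ 2 * (1 + t ^ 2)) / (1 + t ^ 2)
    with hφ
  have hφcont : Continuous φ := by
    apply Continuous.div
    · fun_prop
    · exact continuous_const.add (continuous_pow 2)
    · intro t; exact (one_add_sq_pos t).ne'
  -- the integral of φ is π/4 * E
  have hφint : (∫ t in (0:ℝ)..1, φ t) = Real.pi / 4 * E := by
    have hpt : ∀ t : ℝ, φ t = (E * (1 + 4 * x ^ 2 / Real.pi)) * (1 / (1 + t ^ 2)) - E * x ^ 2 := by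
      intro t
      have := (one_add_sq_pos t).ne'
      simp only [hφ]
      field_simp
    rw [intervalIntegral.integral_congr (fun t _ => hpt t)]
    have hcint : Continuous fun t : ℝ => (E * (1 + 4 * x ^ 2 / Real.pi)) * (1 / (1 + t ^ 2)) := by
      apply continuous_const.mul
      apply Continuous.div continuous_const (continuous_const.add (continuous_pow 2))
      intro t; exact (one_add_sq_pos t).ne'
    rw [intervalIntegral.integral_sub (hcint.intervalIntegrable _ _) intervalIntegrable_const]
    rw [intervalIntegral.integral_const_mul]
    rw [show (∫ t in (0:ℝ)..1, 1 / (1 + t ^ 2)) = Real.arctan 1 - Real.arctan 0 from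
      integral_one_div_one_add_sq]
    rw [Real.arctan_one, Real.arctan_zero, intervalIntegral.integral_const]
    have hπ : Real.pi ≠ 0 := Real.pi_ne_zero
    field_simp
    ring
  -- pointwise bounds
  have key : ∀ t : ℝ, φ t ≤ Real.exp (-x ^ 2 * (1 + t ^ 2)) / (1 + t ^ 2) ∧
      (t ^ 2 ≠ 4 / Real.pi - 1 → φ t < Real.exp (-x ^ 2 * (1 + t ^ 2)) / (1 + t ^ 2)) := by
    intro t
    have ht := one_add_sq_pos t
    set y := x ^ 2 * (4 / Real.pi - 1 - t ^ 2) with hy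
    have hsplit : Real.exp (-x ^ 2 * (1 + t ^ 2)) = E * Real.exp y := by
      rw [hE, ← Real.exp_add]
      congr 1
      have hπ : Real.pi ≠ 0 := Real.pi_ne_zero
      rw [hy]
      field_simp
      ring
    have hnum : 1 + 4 * x ^ 2 / Real.pi - x ^ 2 * (1 + t ^ 2) = 1 + y := by
      have hπ : Real.pi ≠ 0 := Real.pi_ne_zero
      rw [hy]
      field_simp
      ring
    constructor
    · have hle : 1 + y ≤ Real.exp y := by
        have := Real.add_one_le_exp y
        linarith
      rw [hsplit, hφ]
      simp only
      rw [hnum]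
      rw [div_le_div_iff_of_pos_right ht]
      exact mul_le_mul_of_nonneg_left hle hEpos.le
    · intro hne
      have hyne : y ≠ 0 := by
        rw [hy]
        intro hcon
        rcases mul_eq_zero.1 hcon with h | h
        · exact hx (pow_eq_zero_iff (n := 2) (by norm_num) |>.1 h)
        · apply hne; linarith
      have hlt : 1 + y < Real.exp y := by
        have := Real.add_one_lt_exp hyne
        linarith
      rw [hsplit, hφ]
      simp only
      rw [hnum]
      rw [div_lt_div_iff_of_pos_right ht]
      exact (mul_lt_mul_iff_right₀ hEpos).2 hlt
  obtain ⟨hppos, hplt1⟩ := pi_facts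
  set a := Real.sqrt (4 / Real.pi - 1) with ha
  have ha2 : a ^ 2 = 4 / Real.pi - 1 := Real.sq_sqrt hppos.le
  have hapos : 0 < a := Real.sqrt_pos.2 hppos
  have halt1 : a < 1 := by nlinarith [ha2, hapos]
  set ψ : ℝ → ℝ := fun t => Real.exp (-x ^ 2 * (1 + t ^ 2)) / (1 + t ^ 2) - φ t with hψ
  have hψcont : Continuous ψ := (cont_Fx x).sub hφcont
  have h1 : 0 < ∫ t in (0:ℝ)..a, ψ t := by
    apply intervalIntegral.intervalIntegral_pos_of_pos_on
      (hψcont.intervalIntegrable _ _) _ hapos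
    intro t ht
    have hne : t ^ 2 ≠ 4 / Real.pi - 1 := by
      have h : t ^ 2 < a ^ 2 := by nlinarith [ht.1, ht.2]
      rw [ha2] at h; linarith
    have := (key t).2 hne
    simp only [hψ]
    linarith
  have h2 : 0 ≤ ∫ t in a..1, ψ t := by
    apply intervalIntegral.integral_nonneg halt1.le
    intro t _
    have := (key t).1
    simp only [hψ]
    linarith
  have hadd : (∫ t in (0:ℝ)..a, ψ t) + ∫ t in a..1, ψ t = ∫ t in (0:ℝ)..1, ψ t :=
    intervalIntegral.integral_add_adjacent_intervals (hψcont.intervalIntegrable _ _)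
      (hψcont.intervalIntegrable _ _)
  have hsub : (∫ t in (0:ℝ)..1, ψ t) = Q x - Real.pi / 4 * E := by
    simp only [hψ]
    rw [intervalIntegral.integral_sub ((cont_Fx x).intervalIntegrable _ _)
      (hφcont.intervalIntegrable _ _), hφint]
    rfl
  linarith

end PolyaAux

theorem stmt_8 (x : ℝ) (hx : x ≠ 0) :
    erf x ^ 2 < 1 - Real.exp (-4 * x ^ 2 / Real.pi) := by
  have hQP := PolyaAux.QP x
  have hQgt := PolyaAux.Q_gt x hx
  have hπ : 0 < Real.pi := Real.pi_pos
  rw [hQP] at hQgt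
  nlinarith
end

section
/- For all x ≥ 0, erf(x) ≥ (2x/√π)·exp(−x²/3). -/
theorem stmt_9 (x : ℝ) (hx : 0 ≤ x) :
    erf x ≥ (2 * x / Real.sqrt Real.pi) * Real.exp (-x ^ 2 / 3) := by
  have key : (∫ t in (0 : ℝ)..x, Real.exp (-t ^ 2))
      ≥ x * Real.exp (-x ^ 2 / 3) := by
    have hmono : ∫ t in (0 : ℝ)..x, Real.exp (-x ^ 2 / 3) * (1 + x ^ 2 / 3 - t ^ 2)
        ≤ ∫ t in (0 : ℝ)..x, Real.exp (-t ^ 2) := by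
      apply intervalIntegral.integral_mono_on hx
      · apply Continuous.intervalIntegrable
        continuity
      · apply Continuous.intervalIntegrable
        continuity
      · intro t _
        have h1 : (x ^ 2 / 3 - t ^ 2) + 1 ≤ Real.exp (x ^ 2 / 3 - t ^ 2) :=
          Real.add_one_le_exp _
        have h2 : Real.exp (-x ^ 2 / 3) * Real.exp (x ^ 2 / 3 - t ^ 2)
            = Real.exp (-t ^ 2) := by
          rw [← Real.exp_add]; ring_nf
        calc Real.exp (-x ^ 2 / 3) * (1 + x ^ 2 / 3 - t ^ 2)
            ≤ Real.exp (-x ^ 2 / 3) * Real.exp (x ^ 2 / 3 - t ^ 2) := by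
              apply mul_le_mul_of_nonneg_left _ (Real.exp_pos _).le
              linarith
          _ = Real.exp (-t ^ 2) := h2
    have hcalc : ∫ t in (0 : ℝ)..x, Real.exp (-x ^ 2 / 3) * (1 + x ^ 2 / 3 - t ^ 2)
        = x * Real.exp (-x ^ 2 / 3) := by
      rw [intervalIntegral.integral_const_mul]
      have : ∫ t in (0 : ℝ)..x, (1 + x ^ 2 / 3 - t ^ 2)
          = x := by
        have h1 : ∫ t in (0 : ℝ)..x, (1 + x ^ 2 / 3 - t ^ 2)
            = (∫ _ in (0 : ℝ)..x, (1 + x ^ 2 / 3)) - ∫ t in (0 : ℝ)..x, t ^ 2 := by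
          rw [← intervalIntegral.integral_sub]
          · apply Continuous.intervalIntegrable; continuity
          · apply Continuous.intervalIntegrable; continuity
        rw [h1, intervalIntegral.integral_const, integral_pow]
        simp only [smul_eq_mul]
        ring
      rw [this]; ring
    rw [← hcalc]
    exact hmono
  have hpi : 0 < 2 / Real.sqrt Real.pi :=
    div_pos two_pos (Real.sqrt_pos.mpr Real.pi_pos)
  have := mul_le_mul_of_nonneg_left key hpi.le
  unfold erf
  calc (2 * x / Real.sqrt Real.pi) * Real.exp (-x ^ 2 / 3)
      = (2 / Real.sqrt Real.pi) * (x * Real.exp (-x ^ 2 / 3)) := by ring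
    _ ≤ _ := this
end
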